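/- The Lie algebra 𝔤 with basis {A, p₁, p₂, q₁, q₂, Xₐ, JXₐ (a=1..n)} and nonzero brackets [A,q₁]=2p₂, [A,q₂]=2εp₁, [p₁,q₁]=-p₁, [p₁,q₂]=p₂+A, [p₂,q₁]=-3p₂-A, [p₂,q₂]=-εp₁, [q₁,q₂]=2b p₂ - ½(R₀-2b)A, [q₁,Xₐ]=Xₐ, [q₁,JXₐ]=JXₐ, [q₂,Xₐ]=JXₐ, [q₂,JXₐ]=εXₐ, [Xₐ,JXₐ]=2p₂+A (for fixed constants ε=±1, b, R₀ ∈ ℝ) is a solvable Lie algebra. -/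

import Mathlib

/-- Auxiliary: a bilinear property of brackets extends from generating sets to spans. -/
lemma bilin_span_aux {L : Type*} [LieRing L] [LieAlgebra ℝ L] {s t : Set L}
    {N : Submodule ℝ L} (h : ∀ u ∈ s, ∀ v ∈ t, ⁅u, v⁆ ∈ N) :
    ∀ x ∈ Submodule.span ℝ s, ∀ y ∈ Submodule.span ℝ t, ⁅x, y⁆ ∈ N := by
  intro x hx y hy
  induction hx using Submodule.span_induction with
  | mem u hu =>
    induction hy using Submodule.span_induction with
    | mem v hv => exact h u hu v hv
    | zero => simp
    | add v w _ _ hv hw => rw [lie_add]; exact N.add_mem hv hw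
    | smul t v _ hv => rw [lie_smul]; exact N.smul_mem t hv
  | zero => simp
  | add u w _ _ hu hw => rw [add_lie]; exact N.add_mem hu hw
  | smul t u _ hu => rw [smul_lie]; exact N.smul_mem t hu

/-- The real Lie algebra `𝔤` with basis
`{A, p₁, p₂, q₁, q₂, Xₐ, JXₐ (a = 1..n)}` and the listed nonzero brackets (all other
brackets of basis elements being zero) is solvable.
Here `A = B (inl 0)`, `p₁ = B (inl 1)`, `p₂ = B (inl 2)`, `q₁ = B (inl 3)`,
`q₂ = B (inl 4)`, `Xₐ = B (inr (a,0))`, `JXₐ = B (inr (a,1))`. -/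
theorem stmt11 (n : ℕ) (ε b R₀ : ℝ) (hε : ε = 1 ∨ ε = -1)
    (L : Type*) [LieRing L] [LieAlgebra ℝ L]
    (B : Module.Basis (Fin 5 ⊕ Fin n × Fin 2) ℝ L)
    (A p1 p2 q1 q2 : L) (X Y : Fin n → L)
    (hA : A = B (Sum.inl 0)) (hp1 : p1 = B (Sum.inl 1)) (hp2 : p2 = B (Sum.inl 2))
    (hq1 : q1 = B (Sum.inl 3)) (hq2 : q2 = B (Sum.inl 4))
    (hX : ∀ a, X a = B (Sum.inr (a, 0))) (hY : ∀ a, Y a = B (Sum.inr (a, 1)))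
    (h1 : ⁅A, q1⁆ = (2 : ℝ) • p2)
    (h2 : ⁅A, q2⁆ = (2 * ε) • p1)
    (h3 : ⁅p1, q1⁆ = -p1)
    (h4 : ⁅p1, q2⁆ = p2 + A)
    (h5 : ⁅p2, q1⁆ = -((3 : ℝ) • p2) - A)
    (h6 : ⁅p2, q2⁆ = -(ε • p1))
    (h7 : ⁅q1, q2⁆ = (2 * b) • p2 - ((R₀ - 2 * b) / 2) • A)
    (h8 : ∀ a, ⁅q1, X a⁆ = X a)
    (h9 : ∀ a, ⁅q1, Y a⁆ = Y a)
    (h10 : ∀ a, ⁅q2, X a⁆ = Y a)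
    (h11 : ∀ a, ⁅q2, Y a⁆ = ε • X a)
    (h12 : ∀ a, ⁅X a, Y a⁆ = (2 : ℝ) • p2 + A)
    (hz1 : ⁅A, p1⁆ = 0) (hz2 : ⁅A, p2⁆ = 0)
    (hz3 : ∀ a, ⁅A, X a⁆ = 0) (hz4 : ∀ a, ⁅A, Y a⁆ = 0)
    (hz5 : ⁅p1, p2⁆ = 0)
    (hz6 : ∀ a, ⁅p1, X a⁆ = 0) (hz7 : ∀ a, ⁅p1, Y a⁆ = 0)
    (hz8 : ∀ a, ⁅p2, X a⁆ = 0) (hz9 : ∀ a, ⁅p2, Y a⁆ = 0)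
    (hz10 : ∀ a c, ⁅X a, X c⁆ = 0)
    (hz11 : ∀ a c, ⁅Y a, Y c⁆ = 0)
    (hz12 : ∀ a c, a ≠ c → ⁅X a, Y c⁆ = 0) :
    LieAlgebra.IsSolvable L := by
  clear hε
  -- flipping lemma
  have flip : ∀ x y : L, ⁅x, y⁆ = 0 → ⁅y, x⁆ = 0 := fun x y h => by
    rw [← lie_skew, h, neg_zero]
  -- reversed brackets
  have h1' : ⁅q1, A⁆ = -((2 : ℝ) • p2) := by rw [← lie_skew, h1]
  have h2' : ⁅q2, A⁆ = -((2 * ε) • p1) := by rw [← lie_skew, h2]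
  have h3' : ⁅q1, p1⁆ = -(-p1) := by rw [← lie_skew, h3]
  have h4' : ⁅q2, p1⁆ = -(p2 + A) := by rw [← lie_skew, h4]
  have h5' : ⁅q1, p2⁆ = -(-((3 : ℝ) • p2) - A) := by rw [← lie_skew, h5]
  have h6' : ⁅q2, p2⁆ = -(-(ε • p1)) := by rw [← lie_skew, h6]
  have h7' : ⁅q2, q1⁆ = -((2 * b) • p2 - ((R₀ - 2 * b) / 2) • A) := by rw [← lie_skew, h7]
  have h8' : ∀ a, ⁅X a, q1⁆ = -(X a) := fun a => by rw [← lie_skew, h8]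
  have h9' : ∀ a, ⁅Y a, q1⁆ = -(Y a) := fun a => by rw [← lie_skew, h9]
  have h10' : ∀ a, ⁅X a, q2⁆ = -(Y a) := fun a => by rw [← lie_skew, h10]
  have h11' : ∀ a, ⁅Y a, q2⁆ = -(ε • X a) := fun a => by rw [← lie_skew, h11]
  have h12' : ∀ a, ⁅Y a, X a⁆ = -((2 : ℝ) • p2 + A) := fun a => by rw [← lie_skew, h12]
  have hz1' : ⁅p1, A⁆ = 0 := flip _ _ hz1
  have hz2' : ⁅p2, A⁆ = 0 := flip _ _ hz2
  have hz3' : ∀ a, ⁅X a, A⁆ = 0 := fun a => flip _ _ (hz3 a)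
  have hz4' : ∀ a, ⁅Y a, A⁆ = 0 := fun a => flip _ _ (hz4 a)
  have hz5' : ⁅p2, p1⁆ = 0 := flip _ _ hz5
  have hz6' : ∀ a, ⁅X a, p1⁆ = 0 := fun a => flip _ _ (hz6 a)
  have hz7' : ∀ a, ⁅Y a, p1⁆ = 0 := fun a => flip _ _ (hz7 a)
  have hz8' : ∀ a, ⁅X a, p2⁆ = 0 := fun a => flip _ _ (hz8 a)
  have hz9' : ∀ a, ⁅Y a, p2⁆ = 0 := fun a => flip _ _ (hz9 a)
  have hz12' : ∀ a c, a ≠ c → ⁅Y c, X a⁆ = 0 := fun a c h => flip _ _ (hz12 a c h)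
  -- generating set of L
  set G : Set L := ({A, p1, p2, q1, q2} ∪ Set.range X ∪ Set.range Y) with hG
  have hgen : Submodule.span ℝ G = ⊤ := by
    rw [eq_top_iff, ← B.span_eq, Submodule.span_le]
    rintro x ⟨i, rfl⟩
    apply Submodule.subset_span
    rcases i with i | ⟨a, k⟩
    · fin_cases i
      · show B (Sum.inl 0) ∈ G; rw [← hA]; simp [hG]
      · show B (Sum.inl 1) ∈ G; rw [← hp1]; simp [hG]
      · show B (Sum.inl 2) ∈ G; rw [← hp2]; simp [hG]
      · show B (Sum.inl 3) ∈ G; rw [← hq1]; simp [hG]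
      · show B (Sum.inl 4) ∈ G; rw [← hq2]; simp [hG]
    · fin_cases k
      · show B (Sum.inr (a, 0)) ∈ G; rw [← hX a]; simp [hG]
      · show B (Sum.inr (a, 1)) ∈ G; rw [← hY a]; simp [hG]
  -- first-layer generating set and submodule
  set G1 : Set L := ({A, p1, p2} ∪ Set.range X ∪ Set.range Y) with hG1
  set S1 : Submodule ℝ L := Submodule.span ℝ G1 with hS1
  have mA : A ∈ S1 := Submodule.subset_span (by simp [hG1])
  have mp1 : p1 ∈ S1 := Submodule.subset_span (by simp [hG1])
  have mp2 : p2 ∈ S1 := Submodule.subset_span (by simp [hG1])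
  have mX : ∀ a, X a ∈ S1 := fun a => Submodule.subset_span (by simp [hG1])
  have mY : ∀ a, Y a ∈ S1 := fun a => Submodule.subset_span (by simp [hG1])
  -- mixed X/Y brackets
  have bXY : ∀ a c, ⁅X a, Y c⁆ ∈ S1 := by
    intro a c
    rcases eq_or_ne a c with rfl | hac
    · rw [h12]; exact S1.add_mem (S1.smul_mem _ mp2) mA
    · rw [hz12 a c hac]; exact S1.zero_mem
  have bYX : ∀ a c, ⁅Y a, X c⁆ ∈ S1 := by
    intro a c
    rcases eq_or_ne a c with rfl | hac
    · rw [h12' a]; exact S1.neg_mem (S1.add_mem (S1.smul_mem _ mp2) mA)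
    · rw [hz12' c a hac.symm]; exact S1.zero_mem
  have bXY2 : ∀ a c, ⁅X a, Y c⁆ ∈ Submodule.span ℝ {(2 : ℝ) • p2 + A} := by
    intro a c
    rcases eq_or_ne a c with rfl | hac
    · rw [h12]; exact Submodule.subset_span rfl
    · rw [hz12 a c hac]; exact Submodule.zero_mem _
  have bYX2 : ∀ a c, ⁅Y a, X c⁆ ∈ Submodule.span ℝ {(2 : ℝ) • p2 + A} := by
    intro a c
    rcases eq_or_ne a c with rfl | hac
    · rw [h12' a]; exact Submodule.neg_mem _ (Submodule.subset_span rfl)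
    · rw [hz12' c a hac.symm]; exact Submodule.zero_mem _
  -- all brackets of generators of L lie in S1
  have base : ∀ u ∈ G, ∀ v ∈ G, ⁅u, v⁆ ∈ S1 := by
    intro u hu v hv
    simp only [hG, Set.mem_union, Set.mem_insert_iff, Set.mem_singleton_iff,
      Set.mem_range] at hu hv
    obtain ((rfl | rfl | rfl | rfl | rfl) | ⟨a, rfl⟩) | ⟨a, rfl⟩ := hu <;>
      obtain ((rfl | rfl | rfl | rfl | rfl) | ⟨c, rfl⟩) | ⟨c, rfl⟩ := hv
    all_goals
      (try exact bXY _ _) <;> (try exact bYX _ _) <;>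
      simp only [h1, h2, h3, h4, h5, h6, h7, h8, h9, h10, h11,
        h1', h2', h3', h4', h5', h6', h7', h8', h9', h10', h11', h12',
        hz1, hz2, hz3, hz4, hz5, hz6, hz7, hz8, hz9, hz10, hz11,
        hz1', hz2', hz3', hz4', hz5', hz6', hz7', hz8', hz9', lie_self] <;>
      (repeat first
        | exact Submodule.zero_mem _
        | exact mA | exact mp1 | exact mp2 | exact mX _ | exact mY _
        | apply Submodule.add_mem
        | apply Submodule.sub_mem
        | apply Submodule.neg_mem
        | apply Submodule.smul_mem)
  have key : ∀ x y : L, ⁅x, y⁆ ∈ S1 := by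
    intro x y
    have hx : x ∈ Submodule.span ℝ G := by rw [hgen]; trivial
    have hy : y ∈ Submodule.span ℝ G := by rw [hgen]; trivial
    exact bilin_span_aux base x hx y hy
  -- the ideal I1
  let I1 : LieIdeal ℝ L := { S1 with lie_mem := fun {x m} _ => key x m }
  have memI1 : ∀ {x : L}, x ∈ I1 ↔ x ∈ S1 := Iff.rfl
  -- the second layer : span of w = 2 p2 + A
  set w : L := (2 : ℝ) • p2 + A with hw
  set S2 : Submodule ℝ L := Submodule.span ℝ {w} with hS2
  have mw : w ∈ S2 := Submodule.subset_span rfl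
  have wq1 : ⁅q1, w⁆ = (2 : ℝ) • w := by
    rw [hw, lie_add, lie_smul, h5', h1']; module
  have wq2 : ⁅q2, w⁆ = 0 := by
    rw [hw, lie_add, lie_smul, h6', h2']; module
  have keyw : ∀ x : L, ⁅x, w⁆ ∈ S2 := by
    have basew : ∀ u ∈ G, ⁅u, w⁆ ∈ S2 := by
      intro u hu
      simp only [hG, Set.mem_union, Set.mem_insert_iff, Set.mem_singleton_iff,
        Set.mem_range] at hu
      obtain ((rfl | rfl | rfl | rfl | rfl) | ⟨a, rfl⟩) | ⟨a, rfl⟩ := hu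
      · rw [hw, lie_add, lie_smul, hz2, lie_self]; simp
      · rw [hw, lie_add, lie_smul, hz5, hz1']; simp
      · rw [hw, lie_add, lie_smul, lie_self, hz2']; simp
      · rw [wq1]; exact S2.smul_mem _ mw
      · rw [wq2]; exact S2.zero_mem
      · rw [hw, lie_add, lie_smul, hz8' a, hz3' a]; simp
      · rw [hw, lie_add, lie_smul, hz9' a, hz4' a]; simp
    intro x
    have hx : x ∈ Submodule.span ℝ G := by rw [hgen]; trivial
    induction hx using Submodule.span_induction with
    | mem u hu => exact basew u hu
    | zero => simp
    | add u v _ _ hu hv => rw [add_lie]; exact S2.add_mem hu hv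
    | smul t u _ hu => rw [smul_lie]; exact S2.smul_mem t hu
  have keyw2 : ∀ (x m : L), m ∈ S2 → ⁅x, m⁆ ∈ S2 := by
    intro x m hm
    induction hm using Submodule.span_induction with
    | mem v hv => rw [Set.mem_singleton_iff] at hv; subst hv; exact keyw x
    | zero => simp
    | add u v _ _ hu hv => rw [lie_add]; exact S2.add_mem hu hv
    | smul t u _ hu => rw [lie_smul]; exact S2.smul_mem t hu
  let I2 : LieIdeal ℝ L := { S2 with lie_mem := fun {x m} hm => keyw2 x m hm }
  have memI2 : ∀ {x : L}, x ∈ I2 ↔ x ∈ S2 := Iff.rfl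
  -- brackets of S1 generators land in S2
  have base2 : ∀ u ∈ G1, ∀ v ∈ G1, ⁅u, v⁆ ∈ S2 := by
    intro u hu v hv
    simp only [hG1, Set.mem_union, Set.mem_insert_iff, Set.mem_singleton_iff,
      Set.mem_range] at hu hv
    obtain ((rfl | rfl | rfl) | ⟨a, rfl⟩) | ⟨a, rfl⟩ := hu <;>
      obtain ((rfl | rfl | rfl) | ⟨c, rfl⟩) | ⟨c, rfl⟩ := hv
    all_goals
      (try exact bXY2 _ _) <;> (try exact bYX2 _ _) <;>
      simp only [hz1, hz2, hz3, hz4, hz5, hz6, hz7, hz8, hz9, hz10, hz11,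
        hz1', hz2', hz3', hz4', hz5', hz6', hz7', hz8', hz9', lie_self] <;>
      (repeat first
        | exact Submodule.zero_mem _
        | exact mw
        | apply Submodule.neg_mem)
  -- derived series bounds
  have e1 : LieAlgebra.derivedSeries ℝ L 1 = ⁅(⊤ : LieIdeal ℝ L), (⊤ : LieIdeal ℝ L)⁆ := by
    rw [LieAlgebra.derivedSeries_def, LieAlgebra.derivedSeriesOfIdeal_succ,
      LieAlgebra.derivedSeriesOfIdeal_zero]
  have hD1 : LieAlgebra.derivedSeries ℝ L 1 ≤ I1 := by
    rw [e1, LieSubmodule.lie_le_iff]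
    intro x _ m _
    exact key x m
  have hI1I1 : ⁅I1, I1⁆ ≤ I2 := by
    rw [LieSubmodule.lie_le_iff]
    intro x hx m hm
    exact bilin_span_aux base2 x (memI1.mp hx) m (memI1.mp hm)
  have hD2 : LieAlgebra.derivedSeries ℝ L 2 ≤ I2 := by
    have e2 : LieAlgebra.derivedSeries ℝ L 2 =
        ⁅LieAlgebra.derivedSeries ℝ L 1, LieAlgebra.derivedSeries ℝ L 1⁆ := by
      rw [LieAlgebra.derivedSeries_def, LieAlgebra.derivedSeriesOfIdeal_succ]
    rw [e2]
    exact le_trans (LieSubmodule.mono_lie hD1 hD1) hI1I1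
  have hI2I2 : ⁅I2, I2⁆ ≤ (⊥ : LieIdeal ℝ L) := by
    rw [LieSubmodule.lie_le_iff]
    intro x hx m hm
    rw [LieSubmodule.mem_bot]
    have : ∀ u ∈ ({w} : Set L), ∀ v ∈ ({w} : Set L), ⁅u, v⁆ ∈ (⊥ : Submodule ℝ L) := by
      rintro u rfl v rfl
      simp
    have := bilin_span_aux this x (memI2.mp hx) m (memI2.mp hm)
    simpa using this
  have hD3 : LieAlgebra.derivedSeries ℝ L 3 = ⊥ := by
    rw [eq_bot_iff]
    have e3 : LieAlgebra.derivedSeries ℝ L 3 =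
        ⁅LieAlgebra.derivedSeries ℝ L 2, LieAlgebra.derivedSeries ℝ L 2⁆ := by
      rw [LieAlgebra.derivedSeries_def, LieAlgebra.derivedSeriesOfIdeal_succ]
    rw [e3]
    exact le_trans (LieSubmodule.mono_lie hD2 hD2) hI2I2
  exact LieAlgebra.IsSolvable.mk hD3
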